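/- Let g ≥ 2 be an integer, α = g + √(g²−1), and let (rₙ) satisfy Σ_{i|n} i·rᵢ = αⁿ + α⁻ⁿ with all rᵢ ≥ 0. Then n·rₙ ≥ αⁿ + α⁻ⁿ − Σ_{i ≤ n/2} (αⁱ + α⁻ⁱ), and consequently rₙ / (αⁿ/n) → 1 as n → ∞. -/

import Mathlib

open Filter

theorem stmt5 (g : ℤ) (hg : 2 ≤ g)
    (α : ℝ) (hα : α = (g : ℝ) + Real.sqrt ((g : ℝ)^2 - 1))
    (r : ℕ → ℚ)
    (hpos : ∀ i : ℕ, 0 ≤ r i)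
    (hr : ∀ n : ℕ, 1 ≤ n →
      (∑ i ∈ n.divisors, (i : ℝ) * (r i : ℝ)) = α ^ n + α⁻¹ ^ n) :
    (∀ n : ℕ, 1 ≤ n →
      (n : ℝ) * (r n : ℝ) ≥
        α ^ n + α⁻¹ ^ n - ∑ i ∈ Finset.Icc 1 (n / 2), (α ^ i + α⁻¹ ^ i)) ∧
    Tendsto (fun n : ℕ => (r n : ℝ) / (α ^ n / (n : ℝ))) atTop (nhds 1) := by
  have hg2 : (2:ℝ) ≤ (g:ℝ) := by exact_mod_cast hg
  have hsqnn : 0 ≤ Real.sqrt ((g:ℝ)^2 - 1) := Real.sqrt_nonneg _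
  have hα1 : 1 < α := by rw [hα]; linarith
  have hα0 : 0 < α := by linarith
  have hαne : α ≠ 0 := ne_of_gt hα0
  have hα1ne : α - 1 ≠ 0 := by intro h; linarith [sub_eq_zero.mp h]
  have hinv0 : 0 < α⁻¹ := inv_pos.2 hα0
  have hinv1 : α⁻¹ < 1 := by
    rw [inv_lt_one_iff₀]; right; exact hα1
  have hmulinv : α⁻¹ * α = 1 := inv_mul_cancel₀ hαne
  -- key termwise bound
  have key : ∀ i : ℕ, 1 ≤ i → (i:ℝ) * (r i : ℝ) ≤ α ^ i + α⁻¹ ^ i := by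
    intro i hi
    rw [← hr i hi]
    apply Finset.single_le_sum (f := fun j : ℕ => (j:ℝ) * (r j : ℝ))
    · intro j _
      exact mul_nonneg (Nat.cast_nonneg j) (by exact_mod_cast hpos j)
    · exact Nat.mem_divisors_self i (by omega)
  -- Part 1
  have part1 : ∀ n : ℕ, 1 ≤ n → (n:ℝ)*(r n:ℝ) ≥
      α^n + α⁻¹^n - ∑ i ∈ Finset.Icc 1 (n/2), (α^i + α⁻¹^i) := by
    intro n hn
    have hmem : n ∈ n.divisors := Nat.mem_divisors_self n (by omega)
    have hsum := hr n hn
    rw [← Finset.add_sum_erase _ _ hmem] at hsum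
    have hsub : n.divisors.erase n ⊆ Finset.Icc 1 (n/2) := by
      intro i hi
      rw [Finset.mem_erase] at hi
      obtain ⟨hne, hidvd⟩ := hi
      have h1 := Nat.pos_of_mem_divisors hidvd
      obtain ⟨k, hk⟩ := (Nat.mem_divisors.mp hidvd).1
      have hk2 : 2 ≤ k := by
        by_contra h
        push_neg at h
        interval_cases k
        · simp at hk; omega
        · simp at hk; omega
      have h2 : i * 2 ≤ n := by
        calc i*2 ≤ i*k := Nat.mul_le_mul_left i hk2
          _ = n := hk.symm
      rw [Finset.mem_Icc]
      omega
    have hbound : ∑ i ∈ n.divisors.erase n, (i:ℝ)*(r i:ℝ) ≤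
        ∑ i ∈ Finset.Icc 1 (n/2), (α^i + α⁻¹^i) := by
      calc ∑ i ∈ n.divisors.erase n, (i:ℝ)*(r i:ℝ)
          ≤ ∑ i ∈ n.divisors.erase n, (α^i + α⁻¹^i) := by
            apply Finset.sum_le_sum
            intro i hi
            exact key i (Nat.pos_of_mem_divisors (Finset.mem_of_mem_erase hi))
        _ ≤ ∑ i ∈ Finset.Icc 1 (n/2), (α^i + α⁻¹^i) := by
            apply Finset.sum_le_sum_of_subset_of_nonneg hsub
            intro i _ _
            positivity
    linarith
  -- geometric sum bound
  have hgeom : ∀ m : ℕ, ∑ i ∈ Finset.Icc 1 m, α^i ≤ α^(m+1)/(α-1) := by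
    intro m
    induction m with
    | zero =>
      simp
      exact div_nonneg (by positivity) (by linarith)
    | succ k ih =>
      rw [Finset.sum_Icc_succ_top (by omega)]
      have heq : α^(k+1)/(α-1) + α^(k+1) = α^(k+1+1)/(α-1) := by
        field_simp
        ring
      linarith
  have hSb : ∀ m : ℕ, (∑ i ∈ Finset.Icc 1 m, (α^i + α⁻¹^i)) ≤ (2*α/(α-1)) * α^m := by
    intro m
    have h1 : ∑ i ∈ Finset.Icc 1 m, (α^i + α⁻¹^i) ≤ ∑ i ∈ Finset.Icc 1 m, 2*α^i := by
      apply Finset.sum_le_sum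
      intro i _
      have : α⁻¹^i ≤ α^i := pow_le_pow_left₀ (le_of_lt hinv0) (by linarith) i
      linarith
    rw [show (∑ i ∈ Finset.Icc 1 m, 2*α^i) = 2 * ∑ i ∈ Finset.Icc 1 m, α^i from
      (Finset.mul_sum _ _ _).symm] at h1
    have h2 := hgeom m
    have h3 : (2:ℝ)*(α^(m+1)/(α-1)) = (2*α/(α-1))*α^m := by
      field_simp
      ring
    nlinarith
  -- auxiliary identities
  have hkey2 : ∀ n:ℕ, ((α⁻¹^2))^n * α^n = α⁻¹^n := by
    intro n
    rw [← mul_pow]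
    congr 1
    rw [sq, mul_assoc, hmulinv, mul_one]
  have hmest : ∀ n:ℕ, α^(n/2) ≤ α⁻¹^(n/2) * α^n := by
    intro n
    have h2m : α^(2*(n/2)) ≤ α^n := pow_le_pow_right₀ (le_of_lt hα1) (by omega)
    have hxy : α^(n/2) = α⁻¹^(n/2) * α^(2*(n/2)) := by
      rw [two_mul, pow_add, ← mul_assoc, ← mul_pow, hmulinv, one_pow, one_mul]
    rw [hxy]
    exact mul_le_mul_of_nonneg_left h2m (by positivity)
  have hUB : ∀ n : ℕ, 1 ≤ n → (r n:ℝ)*(n:ℝ)/α^n ≤ 1 + ((α⁻¹^2))^n := by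
    intro n hn
    rw [div_le_iff₀ (pow_pos hα0 n)]
    have h1 := key n hn
    have h2 := hkey2 n
    nlinarith
  have hLB : ∀ n : ℕ, 1 ≤ n →
      1 + ((α⁻¹^2))^n - (2*α/(α-1)) * α⁻¹^(n/2) ≤ (r n:ℝ)*(n:ℝ)/α^n := by
    intro n hn
    rw [le_div_iff₀ (pow_pos hα0 n)]
    have h1 := part1 n hn
    have h2 := hkey2 n
    have h3 := hSb (n/2)
    have h4 := hmest n
    have hC : 0 < 2*α/(α-1) := by
      apply div_pos (by linarith) (by linarith)
    have h5 : (2*α/(α-1)) * α^(n/2) ≤ (2*α/(α-1)) * (α⁻¹^(n/2) * α^n) :=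
      mul_le_mul_of_nonneg_left h4 (le_of_lt hC)
    nlinarith
  constructor
  · exact part1
  · have hfun : (fun n:ℕ => (r n:ℝ) / (α^n/(n:ℝ))) = fun n:ℕ => (r n:ℝ)*(n:ℝ)/α^n := by
      funext n
      rw [div_div_eq_mul_div]
    rw [hfun]
    have hc2 : (α⁻¹^2) < 1 := by nlinarith
    have hc2' : (0:ℝ) ≤ α⁻¹^2 := by positivity
    have t1 : Tendsto (fun n:ℕ => ((α⁻¹^2))^n) atTop (nhds 0) :=
      tendsto_pow_atTop_nhds_zero_of_lt_one hc2' hc2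
    have thalf : Tendsto (fun n:ℕ => n/2) atTop atTop :=
      tendsto_atTop_atTop.2 (fun b => ⟨2*b, fun a ha => by omega⟩)
    have t2 : Tendsto (fun n:ℕ => α⁻¹^(n/2)) atTop (nhds 0) :=
      (tendsto_pow_atTop_nhds_zero_of_lt_one (le_of_lt hinv0) hinv1).comp thalf
    have tU : Tendsto (fun n:ℕ => 1 + ((α⁻¹^2))^n) atTop (nhds 1) := by
      have := tendsto_const_nhds (x := (1:ℝ)) (f := atTop (α := ℕ)) |>.add t1
      simpa using this
    have tL : Tendsto (fun n:ℕ => 1 + ((α⁻¹^2))^n - (2*α/(α-1)) * α⁻¹^(n/2))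
        atTop (nhds 1) := by
      have := tU.sub (t2.const_mul (2*α/(α-1)))
      simpa using this
    apply tendsto_of_tendsto_of_tendsto_of_le_of_le' tL tU
    · filter_upwards [eventually_ge_atTop 1] with n hn
      exact hLB n hn
    · filter_upwards [eventually_ge_atTop 1] with n hn
      exact hUB n hn
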